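/- Let n ∈ ℕ and let N be a Hausdorff, second-countable, finite-dimensional smooth manifold without boundary modeled on the Euclidean space ℝⁿ. Then for every y ∈ N there exist an open set U ⊆ N with y ∈ U, a smooth map φ : N → ℝⁿ whose topological support is compact, and a smooth map φ* : ℝⁿ → N such that the closure of {x ∈ ℝⁿ : φ*(x) ≠ y} is compact, φ is injective on U, and φ*(φ(z)) = z for every z ∈ U. -/

import Mathlib

open scoped Manifold
open Metric Set Function

/-- **Extended local charts.** For every point `y` of a Hausdorff, second-countable,
boundaryless smooth `n`-manifold `N`, there exist an open set `U ∋ y`, a smooth,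
compactly supported map `φ : N → ℝⁿ`, and a smooth map `φ* : ℝⁿ → N` such that
the closure of `{x : φ* x ≠ y}` is compact, `φ` is injective on `U`, and
`φ* ∘ φ = id` on `U`. -/
theorem extended_local_charts (n : ℕ) {N : Type*} [TopologicalSpace N] [T2Space N]
    [SecondCountableTopology N] [ChartedSpace (EuclideanSpace ℝ (Fin n)) N]
    [IsManifold (𝓡 n) (⊤ : ℕ∞) N] (y : N) :
    ∃ (U : Set N) (φ : N → EuclideanSpace ℝ (Fin n)) (φstar : EuclideanSpace ℝ (Fin n) → N),
      IsOpen U ∧ y ∈ U ∧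
      ContMDiff (𝓡 n) (𝓡 n) (⊤ : ℕ∞) φ ∧ HasCompactSupport φ ∧
      ContMDiff (𝓡 n) (𝓡 n) (⊤ : ℕ∞) φstar ∧
      IsCompact (closure {x : EuclideanSpace ℝ (Fin n) | φstar x ≠ y}) ∧
      Set.InjOn φ U ∧
      ∀ z ∈ U, φstar (φ z) = z := by
  set c := extChartAt (𝓡 n) y with hc
  set x₀ : EuclideanSpace ℝ (Fin n) := c y with hx₀
  -- choose ε with closedBall x₀ ε ⊆ c.target
  obtain ⟨ε, hε, hball⟩ : ∃ ε > 0, closedBall x₀ ε ⊆ c.target := by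
    rcases (nhds_basis_closedBall.mem_iff).1 (extChartAt_target_mem_nhds (I := 𝓡 n) y) with
      ⟨ε, hε, h⟩
    exact ⟨ε, hε, h⟩
  set χ : ContDiffBump x₀ := ⟨ε / 2, ε, by positivity, by linarith⟩ with hχ
  set g : EuclideanSpace ℝ (Fin n) → EuclideanSpace ℝ (Fin n) :=
    fun x => x₀ + χ x • (x - x₀) with hg
  have hg_smooth : ContMDiff (𝓡 n) (𝓡 n) (⊤ : ℕ∞) g := by
    apply ContDiff.contMDiff
    exact contDiff_const.add (χ.contDiff.smul ((contDiff_id (E := EuclideanSpace ℝ (Fin n))).sub contDiff_const))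
  have hg_mem : ∀ x, g x ∈ closedBall x₀ ε := by
    intro x
    by_cases hx : x ∈ ball x₀ ε
    · simp only [hg, mem_closedBall, dist_eq_norm]
      have : ‖x₀ + χ x • (x - x₀) - x₀‖ = χ x * ‖x - x₀‖ := by
        rw [add_sub_cancel_left, norm_smul, Real.norm_eq_abs, abs_of_nonneg χ.nonneg]
      rw [this]
      calc χ x * ‖x - x₀‖ ≤ 1 * ‖x - x₀‖ := by
            exact mul_le_mul_of_nonneg_right χ.le_one (norm_nonneg _)
        _ ≤ ε := by
            rw [one_mul]
            exact le_of_lt (by simpa [dist_eq_norm] using hx)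
    · have : χ x = 0 := by
        have := χ.support_eq
        by_contra h
        exact hx (this ▸ mem_support.2 h)
      simp [hg, this, mem_closedBall, dist_self, le_of_lt hε]
  have hg_id : ∀ x ∈ ball x₀ (ε / 2), g x = x := by
    intro x hx
    have : χ x = 1 := χ.one_of_mem_closedBall (ball_subset_closedBall hx)
    simp [hg, this]
  -- bump function on the manifold
  obtain ⟨f⟩ : Nonempty (SmoothBumpFunction (𝓡 n) y) := inferInstance
  set U : Set N := c.source ∩ c ⁻¹' ball x₀ (ε / 2) ∩ interior {z | f z = 1} with hU
  have hUopen : IsOpen U :=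
    ((continuousOn_extChartAt (I := 𝓡 n) y).isOpen_inter_preimage (isOpen_extChartAt_source y)
      isOpen_ball).inter isOpen_interior
  have hyU : y ∈ U := by
    refine ⟨⟨mem_extChartAt_source y, ?_⟩, ?_⟩
    · simp [hx₀, hε]
    · exact mem_interior_iff_mem_nhds.2 (f.eventuallyEq_one.mono fun z hz => hz)
  set φ : N → EuclideanSpace ℝ (Fin n) := fun z => f z • c z with hφ
  set φstar : EuclideanSpace ℝ (Fin n) → N := fun x => c.symm (g x) with hφs
  have hφ_smooth : ContMDiff (𝓡 n) (𝓡 n) (⊤ : ℕ∞) φ := f.contMDiff_smul contMDiffOn_extChartAt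
  have hφ_supp : HasCompactSupport φ := by
    apply f.hasCompactSupport.mono
    exact support_smul_subset_left (⇑f) (⇑c)
  have hφs_smooth : ContMDiff (𝓡 n) (𝓡 n) (⊤ : ℕ∞) φstar := by
    apply (contMDiffOn_extChartAt_symm (I := 𝓡 n) y).comp_contMDiff hg_smooth
    exact fun x => hball (hg_mem x)
  have hfone : ∀ z ∈ U, f z = 1 := by
    intro z hz
    have h2 : z ∈ {z : N | (f z : ℝ) = 1} := interior_subset hz.2
    exact h2
  have hφU : ∀ z ∈ U, φ z = c z := by
    intro z hz; simp [hφ, hfone z hz]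
  have hleft : ∀ z ∈ U, φstar (φ z) = z := by
    intro z hz
    rw [hφU z hz]
    simp only [hφs]
    rw [hg_id _ hz.1.2]
    exact c.left_inv hz.1.1
  refine ⟨U, φ, φstar, hUopen, hyU, hφ_smooth, hφ_supp, hφs_smooth, ?_, ?_, hleft⟩
  · have hsub : {x : EuclideanSpace ℝ (Fin n) | φstar x ≠ y} ⊆ closedBall x₀ ε := by
      intro x hx
      by_contra hxb
      apply hx
      have hχ0 : χ x = 0 := by
        have := χ.support_eq
        by_contra h
        exact hxb (ball_subset_closedBall (this ▸ mem_support.2 h))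
      have : g x = x₀ := by simp [hg, hχ0]
      simp only [hφs, this]
      exact c.left_inv (mem_extChartAt_source y)
    exact (isCompact_closedBall x₀ ε).of_isClosed_subset isClosed_closure
      (closure_minimal hsub isClosed_closedBall)
  · intro a ha b hb hab
    rw [hφU a ha, hφU b hb] at hab
    exact c.injOn ha.1.1 hb.1.1 hab
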